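/- Let m be a nonzero polynomial over K[X], F an n-by-1 column with deg(F) < deg(m), and let i < n. Suppose P is the s-Popov solution basis for (m, F) (with s non-decreasing) and its top-right i-by-(n-i) block is zero. Write P1 for the top-left i-by-i block of P. Then P1 is the (s_1,...,s_i)-Popov solution basis for (m, F1), where F1 consists of the first i entries of F; i.e., every solution p in K[X]^{1×i} of p·F1 ≡ 0 mod m lies in the row space of P1, and P1 is in (s_1,...,s_i)-Popov form. -/

import Mathlib

open Polynomial

/-- s-Popov form (pivots on the diagonal, monic, dominating their columns). -/
def IsPopov {K : Type*} [Field K] {n : ℕ} (s : Fin n → ℤ)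
    (P : Matrix (Fin n) (Fin n) K[X]) : Prop :=
  (∀ i, (P i i).Monic) ∧
  (∀ i j, i ≠ j → (P i j).degree < (P j j).degree) ∧
  (∀ i j, P i j ≠ 0 → ((P i j).natDegree : ℤ) + s j ≤ ((P i i).natDegree : ℤ) + s i) ∧
  (∀ i j, i < j → P i j ≠ 0 → ((P i j).natDegree : ℤ) + s j < ((P i i).natDegree : ℤ) + s i)

lemma sum_restrict {M : Type*} [AddCommMonoid M] {n i : ℕ} (hi : i ≤ n) (f : Fin n → M)
    (hf : ∀ b : Fin n, i ≤ b.val → f b = 0) :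
    ∑ b : Fin n, f b = ∑ b : Fin i, f (Fin.castLE hi b) := by
  have hmap : ∑ b : Fin i, f (Fin.castLE hi b)
      = ∑ b ∈ Finset.univ.map (Fin.castLEEmb hi), f b := by
    rw [Finset.sum_map]; rfl
  rw [hmap]
  refine (Finset.sum_subset (Finset.subset_univ _) ?_).symm
  intro x _ hx
  refine hf x ?_
  by_contra h
  push_neg at h
  refine hx ?_
  simp only [Finset.mem_map, Finset.mem_univ, true_and]
  exact ⟨⟨x, h⟩, by simp [Fin.castLEEmb, Fin.ext_iff]⟩

lemma popov_ker {K : Type*} [Field K] {ι : Type*} [Fintype ι] [DecidableEq ι]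
    (P : ι → ι → K[X]) (hmon : ∀ j, (P j j).Monic)
    (hdeg : ∀ k j, k ≠ j → (P k j).degree < (P j j).degree)
    (lam : ι → K[X]) (h : ∀ j, ∑ k, lam k * P k j = 0) : ∀ j, lam j = 0 := by
  classical
  by_contra hc
  push_neg at hc
  have hne : (Finset.univ.filter fun k => lam k ≠ 0).Nonempty := by
    obtain ⟨j, hj⟩ := hc
    exact ⟨j, Finset.mem_filter.mpr ⟨Finset.mem_univ _, hj⟩⟩
  obtain ⟨j, hjmem, hjmax⟩ := Finset.exists_max_image _ (fun k => (lam k).degree) hne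
  simp only [Finset.mem_filter, Finset.mem_univ, true_and] at hjmem
  have hPjj : P j j ≠ 0 := (hmon j).ne_zero
  have hDne : (lam j * P j j) ≠ 0 := mul_ne_zero hjmem hPjj
  have hDbot : ⊥ < (lam j * P j j).degree :=
    bot_lt_iff_ne_bot.mpr (degree_ne_bot.mpr hDne)
  have hrest : (∑ k ∈ Finset.univ.erase j, lam k * P k j).degree < (lam j * P j j).degree := by
    refine lt_of_le_of_lt (degree_sum_le _ _) ?_
    rw [Finset.sup_lt_iff hDbot]
    intro k hk
    rcases eq_or_ne (lam k) 0 with h0 | h0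
    · simpa [h0] using hDbot
    have hkj : k ≠ j := Finset.ne_of_mem_erase hk
    calc (lam k * P k j).degree ≤ (lam k).degree + (P k j).degree := degree_mul_le _ _
      _ < (lam j).degree + (P j j).degree := by
          refine WithBot.add_lt_add_of_le_of_lt (degree_ne_bot.mpr h0) ?_ (hdeg k j hkj)
          exact hjmax k (by simp [h0])
      _ = (lam j * P j j).degree := (degree_mul).symm
  have h0 := h j
  rw [← Finset.add_sum_erase _ _ (Finset.mem_univ j)] at h0
  have : (lam j * P j j + ∑ k ∈ Finset.univ.erase j, lam k * P k j).degree
      = (lam j * P j j).degree := degree_add_eq_left_of_degree_lt hrest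
  rw [h0, degree_zero] at this
  exact absurd this.symm (bot_lt_iff_ne_bot.mp hDbot)

/-- if P is the s-Popov solution basis for (m, F) with s
non-decreasing and the top-right i×(n−i) block of P is zero, then the leading
principal i×i block P1 of P is the (s_1,...,s_i)-Popov solution basis for
(m, F1), where F1 consists of the first i entries of F: P1 is in
(s_1,...,s_i)-Popov form, its rows are solutions, and every solution of the
truncated system lies in its row space. -/
theorem leading_block_is_solution_basis {K : Type*} [Field K] {n : ℕ}
    (M : K[X]) (hM : M ≠ 0) (F : Fin n → K[X])
    (hF : ∀ a, (F a).degree < M.degree)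
    (s : Fin n → ℤ) (hs : Monotone s)
    (P : Matrix (Fin n) (Fin n) K[X])
    (hPopov : IsPopov s P)
    (hsol : ∀ a, M ∣ ∑ b, P a b * F b)
    (hspan : ∀ p : Fin n → K[X], (M ∣ ∑ b, p b * F b) →
      p ∈ Submodule.span K[X] (Set.range fun a => P a))
    (i : ℕ) (hi : i < n)
    (hblock : ∀ j k : Fin n, j.val < i → i ≤ k.val → P j k = 0) :
    IsPopov (fun a : Fin i => s (Fin.castLE hi.le a))
        (fun a b : Fin i => P (Fin.castLE hi.le a) (Fin.castLE hi.le b)) ∧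
    (∀ a : Fin i, M ∣ ∑ b : Fin i, P (Fin.castLE hi.le a) (Fin.castLE hi.le b) *
        F (Fin.castLE hi.le b)) ∧
    (∀ p : Fin i → K[X], (M ∣ ∑ b : Fin i, p b * F (Fin.castLE hi.le b)) →
      p ∈ Submodule.span K[X]
        (Set.range fun a b : Fin i => P (Fin.castLE hi.le a) (Fin.castLE hi.le b))) := by
  obtain ⟨hmon, hdeg, hle, hlt⟩ := hPopov
  have hinj : Function.Injective (Fin.castLE hi.le) := Fin.castLE_injective hi.le
  refine ⟨⟨fun a => hmon _, fun a b hab => hdeg _ _ (fun h => hab (hinj h)),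
      fun a b h => hle _ _ h, fun a b hab h => hlt _ _ hab h⟩,
      ?_, ?_⟩
  · intro a
    have := hsol (Fin.castLE hi.le a)
    rwa [sum_restrict hi.le _ (fun b hb => by
      rw [hblock _ b a.isLt hb, zero_mul])] at this
  · intro p hp
    set q : Fin n → K[X] := fun b => if h : b.val < i then p ⟨b.val, h⟩ else 0 with hq
    have hq0 : ∀ b : Fin n, i ≤ b.val → q b = 0 := fun b hb => dif_neg (not_lt.mpr hb)
    have hqsum : ∑ b, q b * F b = ∑ b : Fin i, p b * F (Fin.castLE hi.le b) := by
      rw [sum_restrict hi.le _ (fun b hb => by rw [hq0 b hb, zero_mul])]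
      refine Finset.sum_congr rfl fun b _ => ?_
      show (if h : (Fin.castLE hi.le b).val < i then p ⟨_, h⟩ else 0) * _ = _
      simp only [Fin.coe_castLE, dif_pos b.isLt, Fin.eta]
    have hmem := hspan q (by rw [hqsum]; exact hp)
    rw [Submodule.mem_span_range_iff_exists_fun] at hmem
    obtain ⟨lam, hlam⟩ := hmem
    -- trailing part of lam vanishes
    have hker : ∀ c : {c : Fin n // i ≤ c.val}, lam c.val = 0 := by
      refine popov_ker (fun c k : {c : Fin n // i ≤ c.val} => P c.val k.val)
        (fun c => hmon _) (fun c k hck => hdeg _ _ (fun h => hck (Subtype.ext h)))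
        (fun c => lam c.val) ?_
      intro k
      have hcol : ∑ c : Fin n, lam c * P c k.val = q k.val := by
        conv_rhs => rw [← hlam]
        simp [Finset.sum_apply]
      have hqk : q k.val = 0 := hq0 _ k.2
      rw [hqk] at hcol
      rw [← hcol]
      rw [← Finset.sum_subtype (s := Finset.univ.filter fun c : Fin n => i ≤ c.val)
        (p := fun c : Fin n => i ≤ c.val) (by simp) (fun c => lam c * P c k.val)]
      refine Finset.sum_filter_of_ne ?_
      intro c _ hc
      by_contra h
      push_neg at h
      exact hc (by rw [hblock c k.val h k.2, mul_zero])
    have hker' : ∀ c : Fin n, i ≤ c.val → lam c = 0 := fun c hc => hker ⟨c, hc⟩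
    rw [Submodule.mem_span_range_iff_exists_fun]
    refine ⟨fun c => lam (Fin.castLE hi.le c), ?_⟩
    funext b
    have hpb : p b = q (Fin.castLE hi.le b) := by
      show p b = if h : (Fin.castLE hi.le b).val < i then p ⟨_, h⟩ else 0
      simp only [Fin.coe_castLE, dif_pos b.isLt, Fin.eta]
    have hqb : q (Fin.castLE hi.le b) = ∑ c : Fin n, lam c * P c (Fin.castLE hi.le b) := by
      conv_lhs => rw [← hlam]
      simp [Finset.sum_apply]
    rw [Finset.sum_apply]
    rw [hpb, hqb, sum_restrict hi.le (fun c => lam c * P c (Fin.castLE hi.le b))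
      (fun c hc => show lam c * _ = 0 by rw [hker' c hc, zero_mul])]
    simp only [Pi.smul_apply, smul_eq_mul]
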